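/- Let |α| < 1 and n ≥ 2, and let λ₁ ≥ λ₂ ≥ … ≥ λ_{n-1} > 0 be the nonzero eigenvalues of the positive semidefinite matrix K_n with entries K_n(j,k) = (1/n)·(α^{|k-j|} − α^{k+j})/(1−α²) − (1/n²)·(1−α^k)(1−α^j)/(1−α)². Then the product λ₁λ₂⋯λ_{n-1} equals n^{-(n-1)}·(1 + α²(n−1)/n − 2α(n−1)/n). -/

import Mathlib

open Polynomial Matrix Finset

namespace Stmt10Aux

variable (α : ℝ) (m : ℕ)

noncomputable def Mm : Matrix (Fin (m+1)) (Fin (m+1)) ℝ :=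
  Matrix.of fun j i => if (i:ℕ) ≤ (j:ℕ) then α ^ ((j:ℕ) - (i:ℕ)) else 0

noncomputable def Mi : Matrix (Fin (m+1)) (Fin (m+1)) ℝ :=
  Matrix.of fun i k => if (i:ℕ) = (k:ℕ) then 1 else if (i:ℕ) = (k:ℕ)+1 then -α else 0

noncomputable def Pm : Matrix (Fin (m+1)) (Fin (m+1)) ℝ :=
  1 - (((m:ℝ)+1))⁻¹ • Matrix.of (fun _ _ => 1)

noncomputable def Gm : Matrix (Fin (m+1)) (Fin (m+1)) ℝ :=
  Matrix.of fun i j => if (j:ℕ) = 0 then 1 else if i = j then 1 else if (i:ℕ) = 0 then -1 else 0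

-- helper: sum over Fin (m+1) of an "if val = c" function
lemma sum_fin_ite (f : Fin (m+1) → ℝ) (c : ℕ) :
    (∑ i : Fin (m+1), if (i:ℕ) = c then f i else 0)
      = if h : c < m+1 then f ⟨c, h⟩ else 0 := by
  split_ifs with h
  · rw [Finset.sum_eq_single ⟨c, h⟩]
    · simp
    · intro b _ hb
      rw [if_neg]
      intro hbc
      exact hb (Fin.ext hbc)
    · simp
  · apply Finset.sum_eq_zero
    intro i _
    rw [if_neg]
    omega

lemma Mm_mul_Mi : Mm α m * Mi α m = 1 := by
  ext j k
  rw [Matrix.mul_apply]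
  have hsplit : ∀ i : Fin (m+1), Mm α m j i * Mi α m i k
      = (if (i:ℕ) = (k:ℕ) then Mm α m j i else 0)
        + (if (i:ℕ) = (k:ℕ)+1 then -α * Mm α m j i else 0) := by
    intro i
    simp only [Mi, Matrix.of_apply]
    split_ifs with h1 h2 <;> first | omega | ring
  rw [Finset.sum_congr rfl (fun i _ => hsplit i), Finset.sum_add_distrib,
    sum_fin_ite, sum_fin_ite]
  rw [dif_pos k.isLt]
  simp only [Mm, Matrix.of_apply, Matrix.one_apply]
  by_cases hk1 : (k:ℕ)+1 < m+1
  · rw [dif_pos hk1]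
    split_ifs with h1 h2 h3 h4 <;>
      first
      | omega
      | (simp_all [Fin.ext_iff]; try ring_nf; try omega)
      | rfl
    all_goals
      (rw [show (j:ℕ) - (k:ℕ) = ((j:ℕ) - (1 + (k:ℕ))) + 1 by omega, pow_succ]; ring)
  · rw [dif_neg hk1]
    split_ifs with h1 h2 <;> simp_all [Fin.ext_iff] <;> omega

lemma det_Mm : (Mm α m).det = 1 := by
  rw [Matrix.det_of_lowerTriangular (Mm α m)]
  · simp [Mm]
  · intro i j hij
    simp only [OrderDual.toDual_lt_toDual] at hij
    simp only [Mm, Matrix.of_apply]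
    rw [if_neg (by omega)]

lemma rowsum_Mm (hα : α ≠ 1) (j : Fin (m+1)) :
    ∑ i : Fin (m+1), Mm α m j i = (1 - α ^ ((j:ℕ)+1)) / (1 - α) := by
  have h1 : ∑ i : Fin (m+1), Mm α m j i
      = ∑ i ∈ Finset.range (m+1), (if i ≤ (j:ℕ) then α ^ ((j:ℕ) - i) else 0) := by
    rw [← Fin.sum_univ_eq_sum_range (fun i => if i ≤ (j:ℕ) then α ^ ((j:ℕ) - i) else 0) (m+1)]
    apply Finset.sum_congr rfl
    intro i hi
    simp [Mm]
  rw [h1, ← Finset.sum_subset (Finset.range_subset_range.2 (by omega : (j:ℕ)+1 ≤ m+1))]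
  · have h2 : ∑ i ∈ Finset.range ((j:ℕ)+1), (if i ≤ (j:ℕ) then α ^ ((j:ℕ) - i) else 0)
        = ∑ i ∈ Finset.range ((j:ℕ)+1), α ^ i := by
      rw [← Finset.sum_range_reflect]
      apply Finset.sum_congr rfl
      intro i hi
      simp only [Finset.mem_range] at hi
      rw [if_pos (by omega)]
      congr 1
      omega
    rw [h2, geom_sum_eq hα, ← neg_div_neg_eq, neg_sub, neg_sub]
  · intro i _ hi
    simp only [Finset.mem_range] at hi
    rw [if_neg (by omega)]

lemma MmMmT (hα2 : α ^ 2 ≠ 1) (j k : Fin (m+1)) (hjk : (j:ℕ) ≤ (k:ℕ)) :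
    (Mm α m * (Mm α m)ᵀ) j k
      = (α ^ ((k:ℕ) - (j:ℕ)) - α ^ ((j:ℕ) + (k:ℕ) + 2)) / (1 - α ^ 2) := by
  rw [Matrix.mul_apply]
  have h1 : ∑ i : Fin (m+1), Mm α m j i * (Mm α m)ᵀ i k
      = ∑ i ∈ Finset.range (m+1),
          (if i ≤ (j:ℕ) then α ^ ((j:ℕ) - i) * α ^ ((k:ℕ) - i) else 0) := by
    rw [← Fin.sum_univ_eq_sum_range
      (fun i => if i ≤ (j:ℕ) then α ^ ((j:ℕ) - i) * α ^ ((k:ℕ) - i) else 0) (m+1)]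
    apply Finset.sum_congr rfl
    intro i hi
    simp only [Matrix.transpose_apply, Mm, Matrix.of_apply]
    split_ifs with h1 h2 h3 <;> first | omega | ring
  rw [h1, ← Finset.sum_subset (Finset.range_subset_range.2 (by omega : (j:ℕ)+1 ≤ m+1))]
  · have h2 : ∑ i ∈ Finset.range ((j:ℕ)+1), (if i ≤ (j:ℕ) then α ^ ((j:ℕ) - i) * α ^ ((k:ℕ) - i) else 0)
        = ∑ i ∈ Finset.range ((j:ℕ)+1), α ^ ((k:ℕ) - (j:ℕ)) * (α ^ 2) ^ i := by
      rw [← Finset.sum_range_reflect]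
      apply Finset.sum_congr rfl
      intro i hi
      simp only [Finset.mem_range] at hi
      rw [if_pos (by omega)]
      have e1 : (j:ℕ) - ((j:ℕ)+1-1-i) = i := by omega
      have e2 : (k:ℕ) - ((j:ℕ)+1-1-i) = (k:ℕ)-(j:ℕ) + i := by omega
      rw [e1, e2, pow_add, ← pow_mul]
      ring
    have h4 : α ^ ((k:ℕ) - (j:ℕ)) * (α ^ 2) ^ ((j:ℕ)+1) = α ^ ((j:ℕ) + (k:ℕ) + 2) := by
      rw [← pow_mul, ← pow_add]
      congr 1
      omega
    rw [h2, ← Finset.mul_sum, geom_sum_eq hα2, ← neg_div_neg_eq, neg_sub, neg_sub,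
      ← mul_div_assoc]
    congr 1
    rw [mul_sub, mul_one, h4]
  · intro i _ hi
    simp only [Finset.mem_range] at hi
    rw [if_neg (by omega)]

noncomputable def Km : Matrix (Fin (m+1)) (Fin (m+1)) ℝ :=
  Matrix.of (fun j k : Fin (m+1) =>
    (1 / ((m+1 : ℕ) : ℝ)) * (α ^ ((((k : ℕ) + 1 : ℤ)) - (((j : ℕ) + 1 : ℤ))).natAbs
        - α ^ (((k : ℕ) + 1) + ((j : ℕ) + 1))) / (1 - α ^ 2)
      - (1 / ((m+1 : ℕ) : ℝ) ^ 2) * ((1 - α ^ ((k : ℕ) + 1)) * (1 - α ^ ((j : ℕ) + 1)))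
        / (1 - α) ^ 2)

def Jm : Matrix (Fin (m+1)) (Fin (m+1)) ℝ := Matrix.of (fun _ _ => 1)

lemma Pm_transpose : (Pm m)ᵀ = Pm m := by
  unfold Pm
  rw [Matrix.transpose_sub, Matrix.transpose_one, Matrix.transpose_smul]
  rfl

lemma Kfact_entry (hα1 : α ≠ 1) (hα2 : α ^ 2 ≠ 1) (j k : Fin (m+1)) (hjk : (j:ℕ) ≤ (k:ℕ)) :
    Km α m j k = (((m:ℝ)+1)⁻¹ • (Mm α m * Pm m * (Mm α m)ᵀ)) j k := by
  have hN : ((m:ℝ)+1) ≠ 0 := by positivity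
  have h12 : 1 - α ^ 2 ≠ 0 := fun h => hα2 (by linarith)
  have h1 : 1 - α ≠ 0 := fun h => hα1 (by linarith)
  have hPG : Mm α m * Pm m * (Mm α m)ᵀ
      = Mm α m * (Mm α m)ᵀ
        - ((m:ℝ)+1)⁻¹ • (Mm α m * Jm m * (Mm α m)ᵀ) := by
    simp only [Pm, Jm, Matrix.mul_sub, Matrix.sub_mul, Matrix.mul_smul, Matrix.smul_mul,
      Matrix.mul_one, Matrix.one_mul]
  have hJrow : ∀ b, (Mm α m * Jm m) j b = ∑ i, Mm α m j i := by
    intro b; rw [Matrix.mul_apply]; simp [Jm]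
  have hJ : (Mm α m * Jm m * (Mm α m)ᵀ) j k
      = (∑ i, Mm α m j i) * (∑ i, Mm α m k i) := by
    rw [Matrix.mul_apply]
    simp only [Matrix.transpose_apply, hJrow]
    rw [← Finset.mul_sum]
  have habs : ((((k : ℕ) + 1 : ℤ)) - (((j : ℕ) + 1 : ℤ))).natAbs = (k:ℕ) - (j:ℕ) := by
    omega
  have hexp : ((k : ℕ) + 1) + ((j : ℕ) + 1) = (j:ℕ) + (k:ℕ) + 2 := by omega
  rw [Matrix.smul_apply, hPG, Matrix.sub_apply, Matrix.smul_apply, hJ,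
    MmMmT α m hα2 j k hjk, rowsum_Mm α m hα1 j, rowsum_Mm α m hα1 k]
  simp only [Km, Matrix.of_apply, habs, hexp]
  have hcast : ((m+1 : ℕ) : ℝ) = (m:ℝ)+1 := by push_cast; ring
  rw [hcast]
  simp only [smul_eq_mul]
  field_simp

lemma Kfact (hα1 : α ≠ 1) (hα2 : α ^ 2 ≠ 1) :
    Km α m = ((m:ℝ)+1)⁻¹ • (Mm α m * Pm m * (Mm α m)ᵀ) := by
  have hsymR : (Mm α m * Pm m * (Mm α m)ᵀ)ᵀ = Mm α m * Pm m * (Mm α m)ᵀ := by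
    rw [Matrix.transpose_mul, Matrix.transpose_mul, Matrix.transpose_transpose,
      Pm_transpose, Matrix.mul_assoc]
  ext j k
  rcases le_total (j:ℕ) (k:ℕ) with hjk | hjk
  · exact Kfact_entry α m hα1 hα2 j k hjk
  · have hKsym : Km α m j k = Km α m k j := by
      simp only [Km, Matrix.of_apply]
      rw [show ((((k : ℕ) + 1 : ℤ)) - (((j : ℕ) + 1 : ℤ))).natAbs
          = ((((j : ℕ) + 1 : ℤ)) - (((k : ℕ) + 1 : ℤ))).natAbs by omega,
        show ((k : ℕ) + 1) + ((j : ℕ) + 1) = ((j : ℕ) + 1) + ((k : ℕ) + 1) by omega]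
      ring
    rw [hKsym, Kfact_entry α m hα1 hα2 k j hjk, Matrix.smul_apply, Matrix.smul_apply]
    congr 1
    conv_rhs => rw [← hsymR]
    rw [Matrix.transpose_apply]

lemma sum_fin_ite_const (a b : ℝ) :
    (∑ i : Fin (m+1), if (i:ℕ) = 0 then a else b) = a + m * b := by
  rw [Fin.sum_univ_succ]
  simp [Fin.val_succ, Finset.sum_const, mul_comm]

lemma sum_prod_ite (a b c d : ℝ) :
    (∑ i : Fin (m+1), (if (i:ℕ) = 0 then a else b) * (if (i:ℕ) = 0 then c else d))
      = a*c + m * (b*d) := by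
  have h : ∀ i : Fin (m+1), (if (i:ℕ) = 0 then a else b) * (if (i:ℕ) = 0 then c else d)
      = if (i:ℕ) = 0 then a*c else b*d := by intro i; split_ifs <;> ring
  rw [Finset.sum_congr rfl (fun i _ => h i), sum_fin_ite_const]

lemma det_Gm : (Gm m).det = (m:ℝ) + 1 := by
  classical
  set U : Matrix (Fin (m+1)) (Fin 2) ℝ :=
    Matrix.of (fun i c => if c = (0 : Fin 2) then (if (i:ℕ) = 0 then 0 else 1)
      else (if (i:ℕ) = 0 then -1 else 0)) with hU
  set V : Matrix (Fin 2) (Fin (m+1)) ℝ :=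
    Matrix.of (fun c j => if c = (0 : Fin 2) then (if (j:ℕ) = 0 then 1 else 0)
      else (if (j:ℕ) = 0 then 0 else 1)) with hV
  have hG : Gm m = 1 + U * V := by
    ext i j
    rw [Matrix.add_apply, Matrix.mul_apply, Fin.sum_univ_two]
    simp only [hU, hV, Gm, Matrix.of_apply, Matrix.one_apply]
    by_cases h1 : (j:ℕ) = 0 <;> by_cases h2 : i = j <;> by_cases h3 : (i:ℕ) = 0 <;>
      first
        | (exfalso; subst h2; omega)
        | (exfalso; rw [Fin.ext_iff] at h2; omega)
        | simp_all [Fin.ext_iff, -Fin.val_eq_zero_iff]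
  have h00 : ∑ x : Fin (m+1), V 0 x * U x 0 = 0 := by
    have h : ∀ x : Fin (m+1), V 0 x * U x 0
        = (if (x:ℕ) = 0 then (1:ℝ) else 0) * (if (x:ℕ) = 0 then 0 else 1) := by
      intro x; simp [hU, hV]
    rw [Finset.sum_congr rfl (fun x _ => h x), sum_prod_ite]; norm_num
  have h01 : ∑ x : Fin (m+1), V 0 x * U x 1 = -1 := by
    have h : ∀ x : Fin (m+1), V 0 x * U x 1
        = (if (x:ℕ) = 0 then (1:ℝ) else 0) * (if (x:ℕ) = 0 then -1 else 0) := by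
      intro x; simp [hU, hV]
    rw [Finset.sum_congr rfl (fun x _ => h x), sum_prod_ite]; norm_num
  have h10 : ∑ x : Fin (m+1), V 1 x * U x 0 = m := by
    have h : ∀ x : Fin (m+1), V 1 x * U x 0
        = (if (x:ℕ) = 0 then (0:ℝ) else 1) * (if (x:ℕ) = 0 then 0 else 1) := by
      intro x; simp [hU, hV]
    rw [Finset.sum_congr rfl (fun x _ => h x), sum_prod_ite]; norm_num
  have h11 : ∑ x : Fin (m+1), V 1 x * U x 1 = 0 := by
    have h : ∀ x : Fin (m+1), V 1 x * U x 1
        = (if (x:ℕ) = 0 then (0:ℝ) else 1) * (if (x:ℕ) = 0 then -1 else 0) := by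
      intro x; simp [hU, hV]
    rw [Finset.sum_congr rfl (fun x _ => h x), sum_prod_ite]; norm_num
  have hVU : V * U = Matrix.of ![![(0:ℝ), -1], ![(m:ℝ), 0]] := by
    ext c b
    rw [Matrix.mul_apply]
    fin_cases c <;> fin_cases b <;>
      simp only [Matrix.of_apply, Matrix.cons_val', Matrix.cons_val_zero, Matrix.cons_val_one,
        Matrix.head_cons, Matrix.head_fin_const, Matrix.empty_val', Matrix.cons_val_fin_one] <;>
      first | exact h00 | exact h01 | exact h10 | exact h11
  have hone : (1 : Matrix (Fin 2) (Fin 2) ℝ) + Matrix.of ![![(0:ℝ), -1], ![(m:ℝ), 0]]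
      = Matrix.of ![![(1:ℝ), -1], ![(m:ℝ), 1]] := by
    ext i j
    fin_cases i <;> fin_cases j <;> simp [Matrix.one_apply]
  rw [hG, Matrix.det_one_add_mul_comm, hVU, hone, Matrix.det_fin_two_of]
  ring

lemma colsum_Gm (j : Fin (m+1)) :
    (∑ i : Fin (m+1), Gm m i j) = if (j:ℕ) = 0 then (m:ℝ)+1 else 0 := by
  split_ifs with hj
  · have : ∀ i : Fin (m+1), Gm m i j = 1 := by
      intro i; simp [Gm, hj, Fin.val_eq_zero_iff.mp hj]
    rw [Finset.sum_congr rfl (fun i _ => this i)]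
    simp [mul_comm]
  · have : ∀ i : Fin (m+1), Gm m i j
        = (if i = j then (1:ℝ) else 0) + (if (i:ℕ) = 0 then -1 else 0) := by
      intro i
      simp only [Gm, Matrix.of_apply, if_neg hj]
      split_ifs with h1 h2 <;> first | (exfalso; subst h1; omega) | norm_num
    rw [Finset.sum_congr rfl (fun i _ => this i), Finset.sum_add_distrib,
      Finset.sum_ite_eq' Finset.univ j (fun _ => (1:ℝ)), sum_fin_ite_const]
    simp

lemma PmGm : Pm m * Gm m = Matrix.of (fun i (j : Fin (m+1)) => if (j:ℕ) = 0 then 0 else Gm m i j) := by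
  have hN : ((m:ℝ)+1) ≠ 0 := by positivity
  ext i j
  have : (Pm m * Gm m) i j = Gm m i j - ((m:ℝ)+1)⁻¹ * ∑ b, Gm m b j := by
    simp only [Pm, Matrix.sub_mul, Matrix.smul_mul, Matrix.one_mul, Matrix.sub_apply,
      Matrix.smul_apply, smul_eq_mul]
    congr 1
    rw [Matrix.mul_apply]
    simp [Jm]
  rw [this, colsum_Gm]
  split_ifs with hj
  · have hg : Gm m i j = 1 := by simp [Gm, hj, Fin.val_eq_zero_iff.mp hj]
    rw [hg, Matrix.of_apply, if_pos hj]
    field_simp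
    norm_num
  · rw [Matrix.of_apply, if_neg hj]
    simp

lemma F_col0 (i : Fin (m+1)) : ((Gm m)ᵀ * Pm m * Gm m) i 0 = 0 := by
  rw [Matrix.mul_assoc, Matrix.mul_apply]
  apply Finset.sum_eq_zero
  intro a _
  rw [PmGm]
  simp

lemma F_row0 (j : Fin (m+1)) : ((Gm m)ᵀ * Pm m * Gm m) 0 j = 0 := by
  rw [Matrix.mul_assoc, Matrix.mul_apply]
  have h0 : ∀ a : Fin (m+1), (Gm m)ᵀ 0 a = Gm m a 0 := fun a => rfl
  by_cases hj : (j:ℕ) = 0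
  · apply Finset.sum_eq_zero
    intro a _
    rw [PmGm]
    simp [hj, Fin.val_eq_zero_iff.mp hj]
  · have : ∀ a : Fin (m+1), (Gm m)ᵀ 0 a * (Pm m * Gm m) a j = Gm m a j := by
      intro a
      rw [h0, PmGm]
      have : Gm m a 0 = 1 := by simp [Gm]
      simp [this, hj, Fin.val_ne_zero_iff.mp hj]
    rw [Finset.sum_congr rfl (fun a _ => this a), colsum_Gm, if_neg hj]

lemma F_sub : ((Gm m)ᵀ * Pm m * Gm m).submatrix Fin.succ Fin.succ
    = 1 + Matrix.of (fun _ _ => (1:ℝ)) := by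
  ext i j
  rw [Matrix.submatrix_apply, Matrix.mul_assoc, Matrix.mul_apply]
  have hsj : ((j.succ : Fin (m+1)):ℕ) ≠ 0 := by simp [Fin.val_succ]
  have hsi : ((i.succ : Fin (m+1)):ℕ) ≠ 0 := by simp [Fin.val_succ]
  have hterm : ∀ a : Fin (m+1), (Gm m)ᵀ i.succ a * (Pm m * Gm m) a j.succ
      = ((if a = i.succ then (1:ℝ) else 0) + (if (a:ℕ) = 0 then -1 else 0))
        * ((if a = j.succ then (1:ℝ) else 0) + (if (a:ℕ) = 0 then -1 else 0)) := by
    intro a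
    rw [Matrix.transpose_apply, PmGm]
    simp only [Matrix.of_apply, if_neg hsj]
    congr 1
    · simp only [Gm, Matrix.of_apply, if_neg hsi]
      split_ifs with h1 h2 <;> first | (exfalso; subst h1; omega) | norm_num
    · simp only [Gm, Matrix.of_apply, if_neg hsj]
      split_ifs with h1 h2 <;> first | (exfalso; subst h1; omega) | norm_num
  rw [Finset.sum_congr rfl (fun a _ => hterm a)]
  have hexpand : ∀ a : Fin (m+1),
      ((if a = i.succ then (1:ℝ) else 0) + (if (a:ℕ) = 0 then -1 else 0))
        * ((if a = j.succ then (1:ℝ) else 0) + (if (a:ℕ) = 0 then -1 else 0))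
      = (if a = i.succ then (if a = j.succ then (1:ℝ) else 0) else 0)
        + (if (a:ℕ) = 0 then (1:ℝ) else 0) := by
    intro a
    have h1 : a = i.succ → (a:ℕ) ≠ 0 := by intro h; subst h; exact hsi
    have h2 : a = j.succ → (a:ℕ) ≠ 0 := by intro h; subst h; exact hsj
    split_ifs <;> simp_all
  rw [Finset.sum_congr rfl (fun a _ => hexpand a), Finset.sum_add_distrib,
    Finset.sum_ite_eq' Finset.univ (i.succ)]
  have : (∑ a : Fin (m+1), if (a:ℕ) = 0 then (1:ℝ) else 0) = 1 := by
    rw [sum_fin_ite_const]; ring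
  rw [this, if_pos (Finset.mem_univ _), Matrix.add_apply, Matrix.one_apply, Matrix.of_apply]
  by_cases h : i = j
  · subst h
    rw [if_pos rfl, if_pos rfl]
  · rw [if_neg (fun hc : i.succ = j.succ => h (Fin.succ_injective _ hc)), if_neg h]

lemma colsum_Mi (c : Fin (m+1)) :
    (∑ a : Fin (m+1), Mi α m a c) = if (c:ℕ) < m then 1 - α else 1 := by
  have hsplit : ∀ a : Fin (m+1), Mi α m a c
      = (if (a:ℕ) = (c:ℕ) then (1:ℝ) else 0) + (if (a:ℕ) = (c:ℕ)+1 then -α else 0) := by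
    intro a
    simp only [Mi, Matrix.of_apply]
    split_ifs <;> first | omega | norm_num
  rw [Finset.sum_congr rfl (fun a _ => hsplit a), Finset.sum_add_distrib,
    sum_fin_ite, sum_fin_ite]
  rw [dif_pos c.isLt]
  by_cases hc : (c:ℕ)+1 < m+1
  · rw [dif_pos hc, if_pos (by omega)]
    ring
  · rw [dif_neg hc, if_neg (by omega)]
    ring

lemma S00 : ((Gm m)ᵀ * (Mi α m * (Mi α m)ᵀ) * (Gm m)) 0 0 = m * (1-α)^2 + 1 := by
  have hassoc : (Gm m)ᵀ * (Mi α m * (Mi α m)ᵀ) * (Gm m)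
      = ((Gm m)ᵀ * Mi α m) * ((Gm m)ᵀ * Mi α m)ᵀ := by
    rw [Matrix.transpose_mul, Matrix.transpose_transpose, Matrix.mul_assoc,
      Matrix.mul_assoc, Matrix.mul_assoc]
  rw [hassoc, Matrix.mul_apply]
  have hrow : ∀ c : Fin (m+1), ((Gm m)ᵀ * Mi α m) 0 c = if (c:ℕ) < m then 1 - α else 1 := by
    intro c
    rw [Matrix.mul_apply, ← colsum_Mi]
    apply Finset.sum_congr rfl
    intro a _
    have : (Gm m)ᵀ 0 a = 1 := by simp [Gm, Matrix.transpose_apply]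
    rw [this, one_mul]
  have hterm : ∀ c : Fin (m+1), ((Gm m)ᵀ * Mi α m) 0 c * ((Gm m)ᵀ * Mi α m)ᵀ c 0
      = if (c:ℕ) < m then (1-α)^2 else 1 := by
    intro c
    rw [Matrix.transpose_apply, hrow]
    split_ifs <;> ring
  rw [Finset.sum_congr rfl (fun c _ => hterm c), Fin.sum_univ_castSucc]
  have h1 : ∀ c : Fin m, (if ((c.castSucc : Fin (m+1)):ℕ) < m then (1-α)^2 else 1) = (1-α)^2 := by
    intro c
    rw [if_pos]
    simp only [Fin.coe_castSucc]
    exact c.isLt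
  rw [Finset.sum_congr rfl (fun c _ => h1 c)]
  simp [Fin.val_last, mul_comm]

lemma natDegree_det_le {k : ℕ} (A : Matrix (Fin k) (Fin k) ℝ[X]) (d : Fin k → ℕ)
    (h : ∀ r c, (A r c).natDegree ≤ d r) : A.det.natDegree ≤ ∑ r, d r := by
  rw [Matrix.det_apply]
  apply Polynomial.natDegree_sum_le_of_forall_le
  intro σ _
  have h1 : (Equiv.Perm.sign σ • ∏ i, A (σ i) i).natDegree
      ≤ (∏ i, A (σ i) i).natDegree := by
    rcases Int.units_eq_one_or (Equiv.Perm.sign σ) with hs | hs <;>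
      rw [hs] <;>
      simp only [one_smul, Units.neg_smul, Polynomial.natDegree_neg, le_refl]
  refine h1.trans ((Polynomial.natDegree_prod_le _ _).trans ?_)
  rw [← Equiv.sum_comp σ d]
  exact Finset.sum_le_sum (fun i _ => h (σ i) i)

lemma coeff_det_linear {k : ℕ} (A B : Matrix (Fin k) (Fin k) ℝ) (hB : IsUnit B.det) :
    (Matrix.det (A.map Polynomial.C + (X : ℝ[X]) • B.map Polynomial.C)).coeff k = B.det := by
  have hfac : A.map C + (X : ℝ[X]) • B.map C
      = B.map C * ((X : ℝ[X]) • (1 : Matrix (Fin k) (Fin k) ℝ[X]) + (B⁻¹ * A).map C) := by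
    rw [Matrix.mul_add, Matrix.mul_smul, Matrix.mul_one, ← Matrix.map_mul,
      Matrix.mul_nonsing_inv_cancel_left _ _ hB, add_comm]
  have hXone : ∀ E : Matrix (Fin k) (Fin k) ℝ,
      (X : ℝ[X]) • (1 : Matrix (Fin k) (Fin k) ℝ[X]) + E.map C = Matrix.charmatrix (-E) := by
    intro E
    refine Matrix.ext fun i j => ?_
    by_cases h : i = j <;>
      simp [h, Matrix.charmatrix_apply, Matrix.diagonal_apply, Matrix.one_apply,
        Matrix.map_apply, Matrix.neg_apply, Matrix.add_apply, Matrix.smul_apply,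
        smul_eq_mul]
  rw [hfac, Matrix.det_mul, hXone]
  have hchar : (Matrix.charmatrix (-(B⁻¹ * A))).det = Matrix.charpoly (-(B⁻¹ * A)) := rfl
  rw [hchar, show ((B.map C).det : ℝ[X]) = C B.det from (RingHom.map_det C B).symm,
    Polynomial.coeff_C_mul]
  have hm : (Matrix.charpoly (-(B⁻¹ * A))).coeff k = 1 := by
    have hd := Matrix.charpoly_natDegree_eq_dim (-(B⁻¹ * A))
    have hmon := (Matrix.charpoly_monic (-(B⁻¹ * A))).coeff_natDegree
    rwa [hd, Fintype.card_fin] at hmon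
  rw [hm, mul_one]

lemma det_one_add_ones {k : ℕ} :
    ((1 : Matrix (Fin k) (Fin k) ℝ) + Matrix.of (fun _ _ => (1:ℝ))).det = (k:ℝ) + 1 := by
  have hJ : (Matrix.of (fun _ _ => (1:ℝ)) : Matrix (Fin k) (Fin k) ℝ)
      = Matrix.replicateCol (Fin 1) ((fun _ => 1) : Fin k → ℝ)
        * Matrix.replicateRow (Fin 1) ((fun _ => 1) : Fin k → ℝ) := by
    ext i j
    simp [Matrix.mul_apply]
  have hdot : (((fun _ => 1) : Fin k → ℝ)) ⬝ᵥ (((fun _ => 1) : Fin k → ℝ)) = (k:ℝ) := by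
    simp [dotProduct]
  rw [hJ, show ((1 : Matrix (Fin k) (Fin k) ℝ) + Matrix.replicateCol (Fin 1) ((fun _ => 1) : Fin k → ℝ)
        * Matrix.replicateRow (Fin 1) ((fun _ => 1) : Fin k → ℝ)).det
        = 1 + (((fun _ => 1) : Fin k → ℝ)) ⬝ᵥ (((fun _ => 1) : Fin k → ℝ))
      from Matrix.det_one_add_replicateCol_mul_replicateRow _ _, hdot]
  ring

lemma sum_ite_ne_zero (k : ℕ) :
    (∑ r : Fin (k+1), (if r = 0 then (0:ℕ) else 1)) = k := by
  rw [Fin.sum_univ_succ]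
  simp [Fin.succ_ne_zero]

end Stmt10Aux

open Stmt10Aux in
theorem stmt10 (α : ℝ) (hα : |α| < 1) (n : ℕ) (hn : 2 ≤ n)
    (lam : Fin (n - 1) → ℝ)
    (hpos : ∀ k, 0 < lam k)
    (hmono : ∀ j k : Fin (n - 1), j ≤ k → lam k ≤ lam j)
    (hfact : ∀ t : ℝ,
      Matrix.det ((1 : Matrix (Fin n) (Fin n) ℝ) - t • Matrix.of (fun j k : Fin n =>
          (1 / (n : ℝ)) * (α ^ ((((k : ℕ) + 1 : ℤ)) - (((j : ℕ) + 1 : ℤ))).natAbs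
              - α ^ (((k : ℕ) + 1) + ((j : ℕ) + 1))) / (1 - α ^ 2)
            - (1 / (n : ℝ) ^ 2) * ((1 - α ^ ((k : ℕ) + 1)) * (1 - α ^ ((j : ℕ) + 1)))
              / (1 - α) ^ 2))
        = ∏ k : Fin (n - 1), (1 - lam k * t)) :
    ∏ k : Fin (n - 1), lam k
      = (n : ℝ) ^ (-((n : ℤ) - 1))
        * (1 + α ^ 2 * ((n : ℝ) - 1) / n - 2 * α * ((n : ℝ) - 1) / n) := by
  classical
  have hα1 : α ≠ 1 := by
    intro h; rw [h] at hα; norm_num at hα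
  have hα2 : α ^ 2 ≠ 1 := by
    intro h
    have h' := abs_lt.mp hα
    nlinarith
  obtain ⟨m, rfl⟩ : ∃ m, n = m + 2 := ⟨n - 2, by omega⟩
  set NN : ℝ := ((m+1 : ℕ) : ℝ) + 1 with hNN
  have hN : NN ≠ 0 := by rw [hNN]; positivity
  set c : ℝ := NN⁻¹ with hc
  have hcne : c ≠ 0 := inv_ne_zero hN
  have hK : (Matrix.of (fun j k : Fin (m+2) =>
      (1 / ((m+2 : ℕ) : ℝ)) * (α ^ ((((k : ℕ) + 1 : ℤ)) - (((j : ℕ) + 1 : ℤ))).natAbs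
          - α ^ (((k : ℕ) + 1) + ((j : ℕ) + 1))) / (1 - α ^ 2)
        - (1 / ((m+2 : ℕ) : ℝ) ^ 2) * ((1 - α ^ ((k : ℕ) + 1)) * (1 - α ^ ((j : ℕ) + 1)))
          / (1 - α) ^ 2)) = Km α (m+1) := by
    refine Matrix.ext fun j k => ?_
    simp only [Km, Matrix.of_apply]
  set Pp : Polynomial ℝ :=
    Matrix.det ((1 : Matrix (Fin (m+2)) (Fin (m+2)) ℝ[X]) - (X : ℝ[X]) • (Km α (m+1)).map C)
    with hPp
  set Q : Polynomial ℝ := ∏ k : Fin (m+1), (1 - C (lam k) * X) with hQ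
  have hPQ : Pp = Q := by
    apply Polynomial.funext
    intro t
    have hmap : ((1 : Matrix (Fin (m+2)) (Fin (m+2)) ℝ[X]) - (X : ℝ[X]) • (Km α (m+1)).map C).map
        (Polynomial.evalRingHom t) = 1 - t • (Km α (m+1)) := by
      refine Matrix.ext fun i j => ?_
      by_cases h : i = j <;>
        simp [h, Matrix.map_apply, Matrix.sub_apply, Matrix.smul_apply, Matrix.one_apply,
          smul_eq_mul] <;>
        try ring
    have h1 : Pp.eval t = Matrix.det (1 - t • Km α (m+1)) := by
      rw [hPp, show (Polynomial.eval t) = (Polynomial.evalRingHom t : ℝ[X] → ℝ) from rfl,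
        RingHom.map_det, RingHom.mapMatrix_apply, hmap]
    rw [h1, ← hK, hfact t, hQ]
    rw [Polynomial.eval_prod]
    apply Finset.prod_congr rfl
    intro k _
    simp
  have hQcoeff : Q.coeff (m+1) = (-1)^(m+1) * ∏ k : Fin (m+1), lam k := by
    rw [hQ]
    have hb : ∀ p ∈ (Finset.univ : Finset (Fin (m+1))),
        (1 - C (lam p) * X).natDegree ≤ 1 := by
      intro p _
      refine (Polynomial.natDegree_sub_le _ _).trans ?_
      simp only [Polynomial.natDegree_one]
      have := Polynomial.natDegree_C_mul_le (lam p) X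
      simp only [Polynomial.natDegree_X] at this
      omega
    have h := Polynomial.coeff_prod_of_natDegree_le
      (s := (Finset.univ : Finset (Fin (m+1)))) (fun k : Fin (m+1) => 1 - C (lam k) * X) 1 hb
    rw [Finset.card_univ, Fintype.card_fin, mul_one] at h
    rw [h]
    have hco : ∀ k : Fin (m+1), (1 - C (lam k) * X).coeff 1 = (-1) * lam k := by
      intro k
      rw [Polynomial.coeff_sub, Polynomial.coeff_one, Polynomial.coeff_C_mul,
        Polynomial.coeff_X_one]
      norm_num
    rw [Finset.prod_congr rfl (fun k _ => hco k), Finset.prod_mul_distrib,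
      Finset.prod_const, Finset.card_univ, Fintype.card_fin]
  have hsmulmap : ∀ (r : ℝ) (A : Matrix (Fin (m+2)) (Fin (m+2)) ℝ),
      (r • A).map C = C r • A.map C := by
    intro r A
    refine Matrix.ext fun i j => ?_
    simp [Matrix.map_apply, Matrix.smul_apply, smul_eq_mul]
  have hMTM : Mm α (m+1) * (Mi α (m+1) * (Mi α (m+1))ᵀ) * (Mm α (m+1))ᵀ = 1 := by
    have h := Mm_mul_Mi α (m+1)
    have h2 : Mm α (m+1) * (Mi α (m+1) * (Mi α (m+1))ᵀ) * (Mm α (m+1))ᵀ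
        = (Mm α (m+1) * Mi α (m+1)) * ((Mi α (m+1))ᵀ * (Mm α (m+1))ᵀ) := by
      rw [Matrix.mul_assoc, Matrix.mul_assoc, Matrix.mul_assoc]
    rw [h2, ← Matrix.transpose_mul, h, Matrix.transpose_one, mul_one]
  have hKf : Km α (m+1) = NN⁻¹ • (Mm α (m+1) * Pm (m+1) * (Mm α (m+1))ᵀ) := by
    rw [Kfact α (m+1) hα1 hα2, hNN]
  set Mid : Matrix (Fin (m+2)) (Fin (m+2)) ℝ[X] :=
    (Mi α (m+1) * (Mi α (m+1))ᵀ).map C - (C c * X) • (Pm (m+1)).map C with hMid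
  have hA : (1 : Matrix (Fin (m+2)) (Fin (m+2)) ℝ[X]) - (X : ℝ[X]) • (Km α (m+1)).map C
      = (Mm α (m+1)).map C * Mid * ((Mm α (m+1))ᵀ).map C := by
    rw [hMid, mul_sub, sub_mul, Matrix.mul_smul, Matrix.smul_mul,
      ← Matrix.map_mul, ← Matrix.map_mul, ← Matrix.map_mul, ← Matrix.map_mul,
      hMTM, hKf, hsmulmap, Matrix.map_one C (map_zero C) (_root_.map_one C),
      smul_smul, mul_comm (X : ℝ[X]) (C c), hc]
  have hdet1 : Pp = Mid.det := by
    rw [hPp, hA, Matrix.det_mul, Matrix.det_mul,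
      show ((Mm α (m+1)).map C).det = C ((Mm α (m+1)).det) from (RingHom.map_det C _).symm,
      show (((Mm α (m+1))ᵀ).map C).det = C (((Mm α (m+1))ᵀ).det) from (RingHom.map_det C _).symm,
      Matrix.det_transpose, det_Mm, _root_.map_one, one_mul, mul_one]
  set S : Matrix (Fin (m+2)) (Fin (m+2)) ℝ :=
    (Gm (m+1))ᵀ * (Mi α (m+1) * (Mi α (m+1))ᵀ) * Gm (m+1) with hS
  set F : Matrix (Fin (m+2)) (Fin (m+2)) ℝ := (Gm (m+1))ᵀ * Pm (m+1) * Gm (m+1) with hF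
  set B : Matrix (Fin (m+2)) (Fin (m+2)) ℝ[X] :=
    S.map C + (X : ℝ[X]) • ((-c) • F).map C with hB
  have hBform : ((Gm (m+1))ᵀ).map C * Mid * (Gm (m+1)).map C = B := by
    rw [hB, hMid, mul_sub, sub_mul, Matrix.mul_smul, Matrix.smul_mul,
      ← Matrix.map_mul, ← Matrix.map_mul, ← Matrix.map_mul, ← Matrix.map_mul,
      ← hS, ← hF, sub_eq_add_neg, hsmulmap, smul_smul]
    congr 1
    rw [← neg_smul]
    congr 1
    rw [map_neg]
    ring
  have hdetB : B.det = C (NN^2) * Pp := by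
    rw [← hBform, Matrix.det_mul, Matrix.det_mul,
      show (((Gm (m+1))ᵀ).map C).det = C (((Gm (m+1))ᵀ).det) from (RingHom.map_det C _).symm,
      show ((Gm (m+1)).map C).det = C ((Gm (m+1)).det) from (RingHom.map_det C _).symm,
      Matrix.det_transpose, det_Gm, hdet1,
      show (NN^2) = (((m+1:ℕ):ℝ)+1) * (((m+1:ℕ):ℝ)+1) by rw [hNN]; ring,
      _root_.map_mul]
    ring
  have hBent : ∀ a b : Fin (m+2), B a b = C (S a b) + X * C ((-c) * F a b) := by
    intro a b
    rw [hB]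
    simp [Matrix.add_apply, Matrix.smul_apply, Matrix.map_apply, smul_eq_mul]
  have hBcol0 : ∀ a : Fin (m+2), B a 0 = C (S a 0) := by
    intro a
    rw [hBent a 0, hF, F_col0]
    simp
  have hBrow0 : ∀ b : Fin (m+2), B 0 b = C (S 0 b) := by
    intro b
    rw [hBent 0 b, hF, F_row0]
    simp
  have hcoeffB : B.det.coeff (m+1)
      = (((m+1:ℕ):ℝ) * (1-α)^2 + 1) * ((-c)^(m+1) * NN) := by
    rw [Matrix.det_succ_column_zero, Polynomial.finset_sum_coeff, Fin.sum_univ_succ]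
    have hrest : ∀ i : Fin (m+1),
        ((-1:ℝ[X])^((i.succ : Fin (m+2)):ℕ) * B i.succ 0
          * (B.submatrix (i.succ : Fin (m+2)).succAbove Fin.succ).det).coeff (m+1) = 0 := by
      intro i
      have hdeg : (B.submatrix (i.succ : Fin (m+2)).succAbove Fin.succ).det.natDegree
          ≤ ∑ r : Fin (m+1), (if r = 0 then (0:ℕ) else 1) := by
        apply natDegree_det_le
        intro r cc
        rw [Matrix.submatrix_apply]
        by_cases hr : r = 0
        · subst hr
          have h0 : (i.succ : Fin (m+2)).succAbove 0 = 0 := by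
            rw [Fin.succAbove_of_castSucc_lt]
            · exact Fin.castSucc_zero
            · rw [Fin.castSucc_zero]
              exact Fin.succ_pos i
          rw [h0, hBrow0]
          simp
        · rw [if_neg hr, hBent]
          refine (Polynomial.natDegree_add_le _ _).trans ?_
          simp only [Polynomial.natDegree_C]
          have h2 : ((X : ℝ[X]) * C ((-c)
              * F ((i.succ : Fin (m+2)).succAbove r) cc.succ)).natDegree ≤ 1 := by
            refine (Polynomial.natDegree_mul_le).trans ?_
            rw [Polynomial.natDegree_X, Polynomial.natDegree_C]
          omega
      rw [sum_ite_ne_zero] at hdeg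
      have hlt : (B.submatrix (i.succ : Fin (m+2)).succAbove Fin.succ).det.natDegree
          < m + 1 := by omega
      rw [hBcol0]
      have hc1 : (-1:ℝ[X])^((i.succ : Fin (m+2)):ℕ) * C (S i.succ 0)
          = C ((-1)^((i.succ : Fin (m+2)):ℕ) * S i.succ 0) := by
        rw [_root_.map_mul, map_pow, map_neg, _root_.map_one]
      rw [hc1, Polynomial.coeff_C_mul, Polynomial.coeff_eq_zero_of_natDegree_lt hlt,
        mul_zero]
    rw [Finset.sum_congr rfl (fun i _ => hrest i), Finset.sum_const_zero, add_zero]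
    rw [hBcol0]
    have hsub0 : B.submatrix ((0 : Fin (m+2)).succAbove) Fin.succ
        = (S.submatrix Fin.succ Fin.succ).map C
          + (X : ℝ[X]) • (((-c) • ((1 : Matrix (Fin (m+1)) (Fin (m+1)) ℝ)
            + Matrix.of (fun (_ _ : Fin (m+1)) => (1:ℝ)))).map C) := by
      refine Matrix.ext fun r cc => ?_
      rw [Fin.succAbove_zero, Matrix.submatrix_apply, hBent]
      have hFs : F r.succ cc.succ
          = ((1 : Matrix (Fin (m+1)) (Fin (m+1)) ℝ) + Matrix.of (fun (_ _ : Fin (m+1)) => (1:ℝ))) r cc := by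
        rw [← F_sub (m+1), Matrix.submatrix_apply, hF]
      rw [Matrix.add_apply, Matrix.map_apply, Matrix.smul_apply, Matrix.map_apply,
        Matrix.submatrix_apply, Matrix.smul_apply, hFs, smul_eq_mul, smul_eq_mul]
    rw [hsub0]
    have hdetsm : ((-c) • ((1 : Matrix (Fin (m+1)) (Fin (m+1)) ℝ)
        + Matrix.of (fun (_ _ : Fin (m+1)) => (1:ℝ)))).det = (-c)^(m+1) * NN := by
      rw [Matrix.det_smul, det_one_add_ones, Fintype.card_fin, hNN]
    have hunit : IsUnit ((-c) • ((1 : Matrix (Fin (m+1)) (Fin (m+1)) ℝ)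
        + Matrix.of (fun (_ _ : Fin (m+1)) => (1:ℝ)))).det := by
      rw [hdetsm]
      exact isUnit_iff_ne_zero.mpr
        (mul_ne_zero (pow_ne_zero _ (neg_ne_zero.mpr hcne)) hN)
    have hcl := coeff_det_linear (S.submatrix Fin.succ Fin.succ)
      ((-c) • ((1 : Matrix (Fin (m+1)) (Fin (m+1)) ℝ) + Matrix.of (fun (_ _ : Fin (m+1)) => (1:ℝ)))) hunit
    rw [show (((0:Fin (m+2))):ℕ) = 0 from rfl, pow_zero, one_mul,
      Polynomial.coeff_C_mul, hcl, hdetsm, hS, S00]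
  -- combine
  have hkey : ((m+1:ℕ):ℝ) * (1-α)^2 + 1 = NN + α^2 * ((m+1:ℕ):ℝ) - 2*α*((m+1:ℕ):ℝ) := by
    rw [hNN]; ring
  have hPcoeff : NN^2 * Pp.coeff (m+1)
      = (((m+1:ℕ):ℝ) * (1-α)^2 + 1) * ((-c)^(m+1) * NN) := by
    rw [← hcoeffB, hdetB, Polynomial.coeff_C_mul]
  have hprod : ∏ k : Fin (m+1), lam k
      = (((m+1:ℕ):ℝ) * (1-α)^2 + 1) * c^(m+1) / NN := by
    have hE : NN^2 * ((-1:ℝ))^(m+1) * ∏ k : Fin (m+1), lam k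
        = (((m+1:ℕ):ℝ) * (1-α)^2 + 1) * (((-1:ℝ))^(m+1) * c^(m+1) * NN) := by
      have h1 : Pp.coeff (m+1) = (-1)^(m+1) * ∏ k : Fin (m+1), lam k := by
        rw [hPQ, hQcoeff]
      calc NN^2 * ((-1:ℝ))^(m+1) * ∏ k : Fin (m+1), lam k
          = NN^2 * Pp.coeff (m+1) := by rw [h1]; ring
        _ = (((m+1:ℕ):ℝ) * (1-α)^2 + 1) * ((-c)^(m+1) * NN) := hPcoeff
        _ = (((m+1:ℕ):ℝ) * (1-α)^2 + 1) * (((-1:ℝ))^(m+1) * c^(m+1) * NN) := by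
            rw [neg_pow]; try ring
    have hneg : ((-1:ℝ))^(m+1) ≠ 0 := pow_ne_zero _ (by norm_num)
    have hE2 : ((-1:ℝ))^(m+1) * (NN * (NN * ∏ k : Fin (m+1), lam k))
        = ((-1:ℝ))^(m+1) * (NN * ((((m+1:ℕ):ℝ) * (1-α)^2 + 1) * c^(m+1))) := by
      have hcN : c * NN = 1 := inv_mul_cancel₀ hN
      calc ((-1:ℝ))^(m+1) * (NN * (NN * ∏ k : Fin (m+1), lam k))
          = NN^2 * ((-1:ℝ))^(m+1) * ∏ k : Fin (m+1), lam k := by ring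
        _ = (((m+1:ℕ):ℝ) * (1-α)^2 + 1) * (((-1:ℝ))^(m+1) * c^(m+1) * NN) := hE
        _ = ((-1:ℝ))^(m+1) * (NN * ((((m+1:ℕ):ℝ) * (1-α)^2 + 1) * c^(m+1))) := by ring
    have hE3 := mul_left_cancel₀ hneg hE2
    have hE4 := mul_left_cancel₀ hN hE3
    rw [eq_div_iff hN]
    calc (∏ k : Fin (m+1), lam k) * NN = NN * ∏ k : Fin (m+1), lam k := by ring
      _ = (((m+1:ℕ):ℝ) * (1-α)^2 + 1) * c^(m+1) := hE4
  -- final arithmetic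
  show ∏ k : Fin (m+1), lam k = _
  rw [hprod]
  have hNval : ((m+2:ℕ):ℝ) = NN := by rw [hNN]; push_cast; ring
  have hzp : ((m+2:ℕ):ℝ) ^ (-(((m+2:ℕ):ℤ) - 1)) = (NN ^ (m+1))⁻¹ := by
    rw [hNval, show (-(((m+2:ℕ):ℤ) - 1)) = -((m+1:ℕ):ℤ) by push_cast; ring,
      _root_.zpow_neg, zpow_natCast]
  rw [hzp, hNval, hc, inv_pow]
  have hNpow : NN ^ (m+1) ≠ 0 := pow_ne_zero _ hN
  field_simp
  rw [hNN]
  push_cast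
  ring
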